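/- Let G(x) = 4 arctan(x/(2 - 2^{1/3})) - 2 arctan(2^{1/3} x/(2 - 2^{1/3})). Then for all x > 0, G is strictly increasing and 0 < G(x) < π. -/

import Mathlib

noncomputable def Gfun (x : ℝ) : ℝ :=
  4 * Real.arctan (x / (2 - 2 ^ ((1:ℝ)/3)))
    - 2 * Real.arctan (2 ^ ((1:ℝ)/3) * x / (2 - 2 ^ ((1:ℝ)/3)))

lemma a_gt_one : (1:ℝ) < 2 ^ ((1:ℝ)/3) := by
  have := Real.rpow_lt_rpow_left_iff (x := (2:ℝ)) (y := 0) (z := (1:ℝ)/3) one_lt_two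
  simpa [Real.rpow_zero] using this.mpr (by norm_num)

lemma a_lt_two : (2:ℝ) ^ ((1:ℝ)/3) < 2 := by
  have := Real.rpow_lt_rpow_left_iff (x := (2:ℝ)) (y := (1:ℝ)/3) (z := 1) one_lt_two
  simpa [Real.rpow_one] using this.mpr (by norm_num)

lemma c_pos : (0:ℝ) < 2 - 2 ^ ((1:ℝ)/3) := by linarith [a_lt_two]

lemma hasDerivAt_G (x : ℝ) :
    HasDerivAt Gfun
      (4 * ((1 / (1 + (x / (2 - 2 ^ ((1:ℝ)/3)))^2)) * (1 / (2 - 2 ^ ((1:ℝ)/3))))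
        - 2 * ((1 / (1 + (2 ^ ((1:ℝ)/3) * x / (2 - 2 ^ ((1:ℝ)/3)))^2))
            * (2 ^ ((1:ℝ)/3) / (2 - 2 ^ ((1:ℝ)/3))))) x := by
  set c : ℝ := 2 - 2 ^ ((1:ℝ)/3)
  set a : ℝ := (2:ℝ) ^ ((1:ℝ)/3)
  have h1 : HasDerivAt (fun y : ℝ => y / c) (1 / c) x := by
    simpa using (hasDerivAt_id x).div_const c
  have h2 : HasDerivAt (fun y : ℝ => a * y / c) (a / c) x := by
    simpa [mul_comm] using ((hasDerivAt_id x).const_mul a).div_const c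
  have H1 := (Real.hasDerivAt_arctan (x / c)).comp x h1
  have H2 := (Real.hasDerivAt_arctan (a * x / c)).comp x h2
  have H := ((H1.const_mul 4).sub (H2.const_mul 2))
  have hfun : Gfun = fun y : ℝ => 4 * Real.arctan (y / c) - 2 * Real.arctan (a * y / c) := rfl
  rw [hfun]
  exact H

lemma deriv_G_pos (x : ℝ) : 0 < deriv Gfun x := by
  rw [(hasDerivAt_G x).deriv]
  set c : ℝ := 2 - 2 ^ ((1:ℝ)/3) with hc
  set a : ℝ := (2:ℝ) ^ ((1:ℝ)/3) with ha
  have hcpos : 0 < c := c_pos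
  have ha1 : 1 < a := a_gt_one
  have ha2 : a < 2 := a_lt_two
  have hd1 : 0 < 1 + (x / c)^2 := by positivity
  have hd2 : 0 < 1 + (a * x / c)^2 := by positivity
  rw [sub_pos]
  rw [div_mul_div_comm, div_mul_div_comm, one_mul, mul_one, ← mul_div_assoc, ← mul_div_assoc,
    div_lt_div_iff₀ (by positivity) (by positivity),
    show (a * x / c)^2 = a^2 * (x/c)^2 from by ring]
  have key : 0 < (4 - 2*a) * c := by nlinarith
  have key2 : 0 ≤ (4*a^2 - 2*a) * ((x/c)^2 * c) := by
    apply mul_nonneg (by nlinarith) (mul_nonneg (sq_nonneg _) hcpos.le)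
  nlinarith [key, key2]

lemma G_strictMono : StrictMono Gfun :=
  strictMono_of_deriv_pos deriv_G_pos

theorem stmt_9 :
    StrictMonoOn Gfun (Set.Ioi 0) ∧
    ∀ x : ℝ, 0 < x → 0 < Gfun x ∧ Gfun x < Real.pi := by
  refine ⟨G_strictMono.strictMonoOn _, fun x hx => ⟨?_, ?_⟩⟩
  · have h0 : Gfun 0 = 0 := by simp [Gfun]
    have := G_strictMono hx
    rwa [h0] at this
  · set c : ℝ := 2 - 2 ^ ((1:ℝ)/3) with hc
    set a : ℝ := (2:ℝ) ^ ((1:ℝ)/3) with ha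
    have hcpos : 0 < c := c_pos
    have ha1 : 1 < a := a_gt_one
    have hlt : x / c < a * x / c := by
      apply (div_lt_div_iff_of_pos_right hcpos).mpr
      nlinarith
    have harc : Real.arctan (x / c) < Real.arctan (a * x / c) :=
      Real.arctan_strictMono hlt
    have hA : Real.arctan (x / c) < Real.pi / 2 := Real.arctan_lt_pi_div_two _
    show 4 * Real.arctan (x / c) - 2 * Real.arctan (a * x / c) < Real.pi
    linarith
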